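/- Let k be a field and m an absolute value on the rational function field k(T) whose restriction to k is trivial. Then m is either trivial, a power of the degree absolute value m_∞(f) = e^{deg(g)−deg(h)} for f = g/h, or a power of the π-adic absolute value for some irreducible polynomial π ∈ k[T]. -/

import Mathlib

open Polynomial

namespace OstrowskiRatFuncAux

variable {k : Type*} [Field k] (m : RatFunc k → ℝ)

section basic
variable (h_nonneg : ∀ f, 0 ≤ m f)
  (h_zero : m 0 = 0) (h_one : m 1 = 1)
  (h_mul : ∀ f g, m (f * g) = m f * m g)
  (h_add : ∀ f g, m (f + g) ≤ m f + m g)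
  (h_triv_k : ∀ c : k, c ≠ 0 → m (RatFunc.C c) = 1)

include h_one h_mul in
lemma m_ne_zero {f : RatFunc k} (hf : f ≠ 0) : m f ≠ 0 := by
  intro h
  have h2 := h_mul f f⁻¹
  rw [mul_inv_cancel₀ hf, h_one, h, zero_mul] at h2
  exact one_ne_zero h2

include h_nonneg h_one h_mul in
lemma m_pos {f : RatFunc k} (hf : f ≠ 0) : 0 < m f :=
  lt_of_le_of_ne (h_nonneg f) (Ne.symm (m_ne_zero m h_one h_mul hf))

include h_one h_mul in
lemma m_pow (f : RatFunc k) (n : ℕ) : m (f ^ n) = m f ^ n := by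
  induction n with
  | zero => simpa using h_one
  | succ n ih => rw [pow_succ, pow_succ, h_mul, ih]

include h_one h_mul in
lemma m_inv {f : RatFunc k} (hf : f ≠ 0) : m f⁻¹ = (m f)⁻¹ := by
  have h2 := h_mul f f⁻¹
  rw [mul_inv_cancel₀ hf, h_one] at h2
  exact eq_inv_of_mul_eq_one_left (by rw [mul_comm]; exact h2.symm)

include h_one h_mul in
lemma m_div (f g : RatFunc k) (hg : g ≠ 0) : m (f / g) = m f / m g := by
  rw [div_eq_mul_inv, h_mul, m_inv m h_one h_mul hg, div_eq_mul_inv]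

include h_one h_mul in
lemma m_zpow (f : RatFunc k) (hf : f ≠ 0) (n : ℤ) : m (f ^ n) = m f ^ n := by
  cases n with
  | ofNat n => simpa using m_pow m h_one h_mul f n
  | negSucc n =>
      rw [zpow_negSucc, m_inv m h_one h_mul (pow_ne_zero _ hf),
        m_pow m h_one h_mul, zpow_negSucc]

include h_zero h_triv_k in
lemma m_nat_le_one (n : ℕ) : m ((n : RatFunc k)) ≤ 1 := by
  have : ((n : RatFunc k)) = RatFunc.C ((n : k)) := (map_natCast RatFunc.C n).symm
  rw [this]
  by_cases h : (n : k) = 0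
  · rw [h, map_zero, h_zero]; norm_num
  · rw [h_triv_k _ h]

include h_zero h_add in
lemma m_sum {ι : Type*} (s : Finset ι) (f : ι → RatFunc k) :
    m (∑ i ∈ s, f i) ≤ ∑ i ∈ s, m (f i) := by
  classical
  induction s using Finset.induction_on with
  | empty => simp [h_zero]
  | @insert a s ha ih =>
      rw [Finset.sum_insert ha, Finset.sum_insert ha]
      exact le_trans (h_add _ _) (by linarith [ih])

include h_nonneg h_zero h_one h_mul h_add h_triv_k in
lemma nonarch (f g : RatFunc k) : m (f + g) ≤ max (m f) (m g) := by
  set M := max (m f) (m g) with hM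
  have hMf : m f ≤ M := le_max_left _ _
  have hMg : m g ≤ M := le_max_right _ _
  have hM0 : 0 ≤ M := le_trans (h_nonneg f) hMf
  by_contra hlt
  push_neg at hlt
  set t := m (f + g) with ht
  have key : ∀ N : ℕ, t ^ N ≤ (N + 1) * M ^ N := by
    intro N
    have h1 : t ^ N = m ((f + g) ^ N) := (m_pow m h_one h_mul _ _).symm
    rw [h1, add_pow]
    refine le_trans (m_sum m h_zero h_add _ _) ?_
    have hterm : ∀ i ∈ Finset.range (N + 1),
        m (f ^ i * g ^ (N - i) * (N.choose i : RatFunc k)) ≤ M ^ N := by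
      intro i hi
      rw [Finset.mem_range] at hi
      rw [h_mul, h_mul, m_pow m h_one h_mul, m_pow m h_one h_mul]
      have h2 : m f ^ i * m g ^ (N - i) ≤ M ^ i * M ^ (N - i) :=
        mul_le_mul (pow_le_pow_left₀ (h_nonneg f) hMf i)
          (pow_le_pow_left₀ (h_nonneg g) hMg _) (pow_nonneg (h_nonneg g) _)
          (pow_nonneg hM0 i)
      have h3 : M ^ i * M ^ (N - i) = M ^ N := by
        rw [← pow_add]; congr 1; omega
      calc m f ^ i * m g ^ (N - i) * m ((N.choose i : RatFunc k))
          ≤ m f ^ i * m g ^ (N - i) * 1 := by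
            refine mul_le_mul_of_nonneg_left (m_nat_le_one m h_zero h_triv_k _) ?_
            exact mul_nonneg (pow_nonneg (h_nonneg f) _) (pow_nonneg (h_nonneg g) _)
        _ = m f ^ i * m g ^ (N - i) := mul_one _
        _ ≤ M ^ N := h3 ▸ h2
    refine le_trans (Finset.sum_le_card_nsmul _ _ _ hterm) ?_
    rw [Finset.card_range]
    simp [nsmul_eq_mul]
  -- now derive a contradiction
  have hMpos : 0 < M := by
    rcases lt_or_eq_of_le hM0 with h | h
    · exact h
    · exfalso
      have hk := key 1
      simp only [pow_one] at hk
      rw [← h] at hk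
      norm_num at hk
      linarith
  set r := t / M with hr
  have hr1 : 1 < r := (one_lt_div hMpos).mpr hlt
  set x := r - 1 with hx
  have hx0 : 0 < x := by simp [hx]; linarith
  obtain ⟨N, hN⟩ := exists_nat_ge (max 1 (3 / x ^ 2))
  have hN1 : (1 : ℝ) ≤ N := le_trans (le_max_left _ _) hN
  have hN3 : 3 / x ^ 2 ≤ N := le_trans (le_max_right _ _) hN
  have hNx : 3 ≤ N * x ^ 2 := by
    rw [div_le_iff₀ (by positivity)] at hN3; linarith
  have hrN : (1 : ℝ) + N * x ≤ r ^ N := by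
    have := one_add_mul_le_pow (a := x) (by linarith) N
    rw [hx] at this ⊢
    simpa using this
  have hup : r ^ (2 * N) ≤ 2 * N + 1 := by
    have := key (2 * N)
    have h4 : t ^ (2 * N) = r ^ (2 * N) * M ^ (2 * N) := by
      rw [hr, div_pow, div_mul_cancel₀]
      positivity
    rw [h4] at this
    have h5 : (0:ℝ) < M ^ (2 * N) := by positivity
    have := (mul_le_mul_iff_of_pos_right h5).mp (le_trans this (le_of_eq rfl))
    push_cast at this ⊢
    linarith
  have hlow : 2 * (N:ℝ) + 1 < r ^ (2 * N) := by
    have h6 : r ^ (2 * N) = (r ^ N) ^ 2 := by rw [← pow_mul, mul_comm]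
    have h7 : (1 + (N:ℝ) * x) ^ 2 ≤ (r ^ N) ^ 2 := by
      apply pow_le_pow_left₀ (by positivity) hrN
    have h8 : ((N:ℝ) * x) ^ 2 = N * (N * x ^ 2) := by ring
    nlinarith [hrN, hNx, hN1, hx0]
  linarith

include h_nonneg h_zero h_one h_mul h_add h_triv_k in
lemma m_add_eq_of_lt {f g : RatFunc k} (hlt : m f < m g) : m (f + g) = m g := by
  have h1 : m (f + g) ≤ m g :=
    le_trans (nonarch m h_nonneg h_zero h_one h_mul h_add h_triv_k f g)
      (max_le (le_of_lt hlt) le_rfl)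
  refine le_antisymm h1 ?_
  have hneg1 : m (-1 : RatFunc k) = 1 := by
    have h2 : m (-1 : RatFunc k) * m (-1 : RatFunc k) = 1 := by
      rw [← h_mul]; norm_num [h_one]
    nlinarith [h_nonneg (-1 : RatFunc k)]
  have hneg : m (-f) = m f := by
    have : (-f) = (-1) * f := by ring
    rw [this, h_mul, hneg1, one_mul]
  have h3 : m g ≤ max (m (f + g)) (m (-f)) := by
    have : g = (f + g) + (-f) := by ring
    nth_rewrite 1 [this]
    exact nonarch m h_nonneg h_zero h_one h_mul h_add h_triv_k _ _
  rw [hneg] at h3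
  rcases max_cases (m (f + g)) (m f) with ⟨he, _⟩ | ⟨he, _⟩ <;> rw [he] at h3
  · exact h3
  · linarith

end basic

end OstrowskiRatFuncAux

open OstrowskiRatFuncAux

/-- Ostrowski's theorem for k(T): an absolute value on k(T) which is trivial
on k is trivial, a power of the degree absolute value, or a power of a
π-adic absolute value for some irreducible polynomial π. -/
theorem ostrowski_ratfunc {k : Type*} [Field k] (m : RatFunc k → ℝ)
    (h_nonneg : ∀ f, 0 ≤ m f)
    (h_zero : m 0 = 0) (h_one : m 1 = 1)
    (h_mul : ∀ f g, m (f * g) = m f * m g)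
    (h_add : ∀ f g, m (f + g) ≤ m f + m g)
    (h_triv_k : ∀ c : k, c ≠ 0 → m (RatFunc.C c) = 1) :
    (∀ f : RatFunc k, f ≠ 0 → m f = 1) ∨
    (∃ ρ : ℝ, 0 < ρ ∧ ∀ f : RatFunc k, f ≠ 0 →
      m f = Real.exp (f.intDegree : ℝ) ^ ρ) ∨
    (∃ π : Polynomial k, Irreducible π ∧ ∃ ρ : ℝ, 0 < ρ ∧
      ∀ (f : RatFunc k) (n : ℤ) (g h : Polynomial k),
        g ≠ 0 → h ≠ 0 → ¬ π ∣ g → ¬ π ∣ h →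
        f = (algebraMap (Polynomial k) (RatFunc k) π) ^ n *
              algebraMap (Polynomial k) (RatFunc k) g /
              algebraMap (Polynomial k) (RatFunc k) h →
        m f = Real.exp (-(n * π.natDegree : ℝ)) ^ ρ) := by
  classical
  set A : Polynomial k →+* RatFunc k := algebraMap (Polynomial k) (RatFunc k) with hA
  have hconst : ∀ c : k, c ≠ 0 → m (A (Polynomial.C c)) = 1 := by
    intro c hc; rw [hA, RatFunc.algebraMap_C]; exact h_triv_k c hc
  by_cases hX : 1 < m (A Polynomial.X)
  · -- degree case
    right; left
    set mX := m (A Polynomial.X) with hmX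
    have hmX0 : 0 < mX := lt_trans one_pos hX
    -- value on polynomials
    have hpoly : ∀ d : ℕ, ∀ p : Polynomial k, p ≠ 0 → p.natDegree = d →
        m (A p) = mX ^ d := by
      intro d
      induction d using Nat.strong_induction_on with
      | _ d ih =>
        intro p hp hd
        have hlc : p.leadingCoeff ≠ 0 := Polynomial.leadingCoeff_ne_zero.mpr hp
        have hlead : m (A (Polynomial.C p.leadingCoeff * Polynomial.X ^ d)) = mX ^ d := by
          rw [map_mul, map_pow, h_mul, m_pow m h_one h_mul, hconst _ hlc, one_mul]
        by_cases he : p.eraseLead = 0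
        · have hpe : p = Polynomial.C p.leadingCoeff * Polynomial.X ^ d := by
            conv_lhs => rw [← Polynomial.eraseLead_add_C_mul_X_pow p]
            rw [he, zero_add, hd]
          rw [hpe]; exact hlead
        · have hdlt : p.eraseLead.natDegree < d := by
            rcases Polynomial.eraseLead_natDegree_lt_or_eraseLead_eq_zero p with h | h
            · exact hd ▸ h
            · exact absurd h he
          have h1 : m (A p.eraseLead) = mX ^ p.eraseLead.natDegree :=
            ih _ hdlt p.eraseLead he rfl
          have hlt : m (A p.eraseLead) < mX ^ d := by
            rw [h1]; exact pow_lt_pow_right₀ hX hdlt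
          have hpe : p = p.eraseLead + Polynomial.C p.leadingCoeff * Polynomial.X ^ d := by
            conv_lhs => rw [← Polynomial.eraseLead_add_C_mul_X_pow p]
            rw [hd]
          rw [hpe, map_add]
          rw [m_add_eq_of_lt m h_nonneg h_zero h_one h_mul h_add h_triv_k
            (by rw [hlead]; exact hlt), hlead]
    refine ⟨Real.log mX, Real.log_pos hX, ?_⟩
    intro f hf
    have hnum : f.num ≠ 0 := RatFunc.num_ne_zero hf
    have hden : f.denom ≠ 0 := f.denom_ne_zero
    have hfnd : f = A f.num / A f.denom := (RatFunc.num_div_denom f).symm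
    have hAden : A f.denom ≠ 0 := RatFunc.algebraMap_ne_zero hden
    have hmf : m f = mX ^ f.num.natDegree / mX ^ f.denom.natDegree := by
      conv_lhs => rw [hfnd]
      rw [ m_div m h_one h_mul _ _ hAden,
        hpoly _ _ hnum rfl, hpoly _ _ hden rfl]
    have hmfz : m f = mX ^ (f.intDegree) := by
      have : f.intDegree = (f.num.natDegree : ℤ) - (f.denom.natDegree : ℤ) := rfl
      rw [this, zpow_sub₀ (ne_of_gt hmX0), zpow_natCast, zpow_natCast, hmf]
    rw [hmfz]
    rw [Real.rpow_def_of_pos (Real.exp_pos _), Real.log_exp]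
    have hz : mX ^ f.intDegree = Real.exp (f.intDegree * Real.log mX) := by
      have h1 : mX ^ f.intDegree = mX ^ ((f.intDegree : ℝ)) := by
        rw [Real.rpow_intCast]
      rw [h1, Real.rpow_def_of_pos hmX0]
      ring_nf
    rw [hz]
  · -- bounded case
    push_neg at hX
    have hall : ∀ p : Polynomial k, m (A p) ≤ 1 := by
      intro p
      induction p using Polynomial.induction_on with
      | C a =>
          by_cases ha : a = 0
          · rw [ha]; simp only [map_zero, h_zero]; norm_num
          · rw [hA, RatFunc.algebraMap_C, h_triv_k a ha]
      | add p q hp hq =>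
          rw [map_add]
          exact le_trans (nonarch m h_nonneg h_zero h_one h_mul h_add h_triv_k _ _)
            (max_le hp hq)
      | monomial n a hmon =>
          have : Polynomial.C a * Polynomial.X ^ (n + 1) =
              (Polynomial.C a * Polynomial.X ^ n) * Polynomial.X := by ring
          rw [this, map_mul, h_mul]
          exact mul_le_one₀ hmon (h_nonneg _) hX
    by_cases htriv : ∀ p : Polynomial k, p ≠ 0 → m (A p) = 1
    · left
      intro f hf
      rw [← RatFunc.num_div_denom f,
        m_div m h_one h_mul _ _ (RatFunc.algebraMap_ne_zero f.denom_ne_zero),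
        htriv _ (RatFunc.num_ne_zero hf), htriv _ f.denom_ne_zero, div_one]
    · right; right
      push_neg at htriv
      obtain ⟨p0, hp0ne, hp0⟩ := htriv
      have hp0lt : m (A p0) < 1 := lt_of_le_of_ne (hall p0) hp0
      -- the prime ideal
      set I : Ideal (Polynomial k) :=
        { carrier := {p | m (A p) < 1}
          add_mem' := by
            intro a b ha hb
            simp only [Set.mem_setOf_eq] at *
            rw [map_add]
            exact lt_of_le_of_lt
              (nonarch m h_nonneg h_zero h_one h_mul h_add h_triv_k _ _)
              (max_lt ha hb)
          zero_mem' := by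
            simp only [Set.mem_setOf_eq, map_zero, h_zero]; norm_num
          smul_mem' := by
            intro c p hp
            simp only [Set.mem_setOf_eq, smul_eq_mul] at *
            rw [map_mul, h_mul]
            calc m (A c) * m (A p) ≤ 1 * m (A p) :=
                  mul_le_mul_of_nonneg_right (hall c) (h_nonneg _)
              _ = m (A p) := one_mul _
              _ < 1 := hp } with hI
      have hmemI : ∀ p : Polynomial k, p ∈ I ↔ m (A p) < 1 := fun p => Iff.rfl
      have hInebot : I ≠ ⊥ := by
        intro h
        have : p0 ∈ I := hp0lt
        rw [h] at this
        exact hp0ne (Ideal.mem_bot.mp this)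
      have hIprime : I.IsPrime := by
        constructor
        · intro h
          have : (1 : Polynomial k) ∈ I := h ▸ Submodule.mem_top
          rw [hmemI, map_one, h_one] at this
          exact lt_irrefl 1 this
        · intro a b hab
          rw [hmemI, map_mul, h_mul] at hab
          by_contra hcon
          push_neg at hcon
          obtain ⟨ha, hb⟩ := hcon
          rw [hmemI] at ha hb
          push_neg at ha hb
          nlinarith
      have hIP : I.IsPrincipal := IsPrincipalIdealRing.principal I
      set π := Submodule.IsPrincipal.generator I with hπ
      have hπprime : Prime π := Submodule.IsPrincipal.prime_generator_of_isPrime I hInebot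
      have hπirr : Irreducible π := hπprime.irreducible
      have hdvd : ∀ p : Polynomial k, π ∣ p ↔ p ∈ I := by
        intro p
        rw [← Ideal.span_singleton_generator I, Ideal.mem_span_singleton, hπ]
      have hπne : π ≠ 0 := hπprime.ne_zero
      set c := m (A π) with hc
      have hclt : c < 1 := (hmemI π).mp ((hdvd π).mp dvd_rfl)
      have hcpos : 0 < c :=
        m_pos m h_nonneg h_one h_mul (RatFunc.algebraMap_ne_zero hπne)
      have hdeg : 0 < π.natDegree := by
        by_contra h
        push_neg at h
        have hdd : π.natDegree = 0 := Nat.le_zero.mp h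
        · have := Polynomial.eq_C_of_natDegree_eq_zero hdd
          have hcoeff : π.coeff 0 ≠ 0 := by
            intro hz
            rw [hz, map_zero] at this
            exact hπne this
          exact hπirr.not_isUnit (this ▸ Polynomial.isUnit_C.mpr (isUnit_iff_ne_zero.mpr hcoeff))
      set D : ℝ := (π.natDegree : ℝ) with hD
      have hDpos : 0 < D := by positivity
      refine ⟨π, hπirr, -Real.log c / D, ?_, ?_⟩
      · have : Real.log c < 0 := Real.log_neg hcpos hclt
        exact div_pos (by linarith) hDpos
      · intro f n g h hg hh hπg hπh hfe
        have hg1 : m (A g) = 1 := by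
          refine le_antisymm (hall g) ?_
          by_contra hcon
          push_neg at hcon
          exact hπg ((hdvd g).mpr hcon)
        have hh1 : m (A h) = 1 := by
          refine le_antisymm (hall h) ?_
          by_contra hcon
          push_neg at hcon
          exact hπh ((hdvd h).mpr hcon)
        have hAπ : A π ≠ 0 := RatFunc.algebraMap_ne_zero hπne
        have hAh : A h ≠ 0 := RatFunc.algebraMap_ne_zero hh
        have hmf : m f = c ^ n := by
          rw [hfe, m_div m h_one h_mul _ _ hAh, h_mul,
            m_zpow m h_one h_mul _ hAπ, hg1, hh1, mul_one, div_one]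
        rw [hmf]
        rw [Real.rpow_def_of_pos (Real.exp_pos _), Real.log_exp]
        have h1 : c ^ n = Real.exp (Real.log c * n) := by
          rw [← Real.rpow_intCast c n, Real.rpow_def_of_pos hcpos]
        rw [h1]
        congr 1
        field_simp
        ring
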